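/- Let G be a nontrivial finite additive group, N ≥ 1, X : Ω → (Fin N → G) be any random variable, and K_1, …, K_N be G-valued random variables that are mutually independent, each uniformly distributed on G, with (K_1, …, K_N) independent of X. Let V_i := X_i + K_i. Then the pair consisting of (V_1, …, V_N) and the aggregate key Σ_{i=1}^N K_i is conditionally independent of X = (X_1, …, X_N) given the aggregate gradient Σ_{i=1}^N X_i. -/

import Mathlib

open MeasureTheory ProbabilityTheory
open scoped ENNReal


theorem helperA {Ω : Type*} {m : MeasurableSpace Ω} [mΩ : MeasurableSpace Ω]
    (μ : Measure Ω) [IsProbabilityMeasure μ]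
    {β γ : Type*} [MeasurableSpace β] [MeasurableSpace γ]
    {Y : Ω → β} {Z : Ω → γ} (hY : Measurable Y) (hZ : Measurable Z)
    (hind : IndepFun Y Z μ)
    (hm : m ≤ MeasurableSpace.comap Z inferInstance)
    {s : Set β} {t : Set γ} (hs : MeasurableSet s) (ht : MeasurableSet t) :
    (μ⟦Y ⁻¹' s ∩ Z ⁻¹' t | m⟧) =ᵐ[μ]
      fun ω => (μ (Y ⁻¹' s)).toReal * (μ⟦Z ⁻¹' t | m⟧) ω := by
  have hmZ : MeasurableSpace.comap Z inferInstance ≤ mΩ := hZ.comap_le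
  have hm0 : m ≤ mΩ := hm.trans hmZ
  have htZ : MeasurableSet[MeasurableSpace.comap Z (inferInstance : MeasurableSpace γ)]
    (Z ⁻¹' t) := ⟨t, ht, rfl⟩
  have hsY : MeasurableSet[mΩ] (Y ⁻¹' s) := hY hs
  have hint : Integrable ((Y ⁻¹' s).indicator fun _ => (1:ℝ)) μ :=
    (integrable_const 1).indicator hsY
  set c : ℝ := (μ (Y ⁻¹' s)).toReal with hc
  have h2 : μ[(Y ⁻¹' s).indicator (fun _ => (1:ℝ)) | MeasurableSpace.comap Z inferInstance]
      =ᵐ[μ] fun _ => c := by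
    refine (condExp_indep_eq hY.comap_le hmZ
      (stronglyMeasurable_const.indicator ⟨s, hs, rfl⟩)
      ((IndepFun_iff_Indep _ _ _).mp hind)).trans ?_
    filter_upwards with ω
    exact integral_indicator_one hsY
  have h1 : μ[(Y ⁻¹' s ∩ Z ⁻¹' t).indicator (fun _ => (1:ℝ)) | MeasurableSpace.comap Z inferInstance]
      =ᵐ[μ] (Z ⁻¹' t).indicator (fun _ => c) := by
    have e1 : (Y ⁻¹' s ∩ Z ⁻¹' t).indicator (fun _ => (1:ℝ))
        = (Z ⁻¹' t).indicator ((Y ⁻¹' s).indicator fun _ => (1:ℝ)) := by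
      rw [Set.indicator_indicator, Set.inter_comm]
    rw [e1]
    exact (condExp_indicator hint htZ).trans (h2.indicator (s := Z ⁻¹' t))
  calc (μ⟦Y ⁻¹' s ∩ Z ⁻¹' t | m⟧)
      =ᵐ[μ] μ[μ[(Y ⁻¹' s ∩ Z ⁻¹' t).indicator (fun _ => (1:ℝ)) |
          MeasurableSpace.comap Z inferInstance] | m] :=
        (condExp_condExp_of_le hm hmZ).symm
    _ =ᵐ[μ] μ[(Z ⁻¹' t).indicator (fun _ => c) | m] := condExp_congr_ae h1
    _ =ᵐ[μ] fun ω => c * (μ⟦Z ⁻¹' t | m⟧) ω := by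
        have e2 : (Z ⁻¹' t).indicator (fun _ => c)
            = c • (Z ⁻¹' t).indicator (fun _ => (1:ℝ)) := by
          funext ω; by_cases h : ω ∈ Z ⁻¹' t <;> simp [h]
        rw [e2]
        exact (condExp_smul c _ m).trans (by filter_upwards with ω; simp)

theorem helperB {Ω : Type*} {m' : MeasurableSpace Ω} [mΩ : MeasurableSpace Ω]
    [StandardBorelSpace Ω] (μ : Measure Ω) [IsProbabilityMeasure μ]
    {β γ : Type*} [MeasurableSpace β] [MeasurableSpace γ] [Fintype β] [Fintype γ]
    [MeasurableSingletonClass β] [MeasurableSingletonClass γ]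
    (hm' : m' ≤ mΩ) {f : Ω → β} {g : Ω → γ}
    (hf : Measurable f) (hg : Measurable g)
    (h : ∀ p q, (μ⟦f ⁻¹' {p} ∩ g ⁻¹' {q} | m'⟧)
      =ᵐ[μ] fun ω => (μ⟦f ⁻¹' {p} | m'⟧) ω * (μ⟦g ⁻¹' {q} | m'⟧) ω) :
    CondIndepFun m' hm' f g μ := by
  classical
  rw [condIndepFun_iff_condExp_inter_preimage_eq_mul hf hg]
  intro s t hs ht
  set Ps := Finset.univ.filter (· ∈ s) with hPs
  set Qt := Finset.univ.filter (· ∈ t) with hQt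
  -- pointwise decomposition of indicators
  have hdecf : ∀ (ω : Ω), (f ⁻¹' s).indicator (fun _ => (1:ℝ)) ω
      = ∑ p ∈ Ps, (f ⁻¹' {p}).indicator (fun _ => (1:ℝ)) ω := by
    intro ω
    by_cases hω : f ω ∈ s
    · rw [Set.indicator_of_mem (Set.mem_preimage.mpr hω)]
      rw [Finset.sum_eq_single (f ω)]
      · simp
      · intro p _ hne
        exact Set.indicator_of_notMem
          (fun hmem => hne (Set.mem_singleton_iff.mp (Set.mem_preimage.mp hmem)).symm) _
      · intro hmem
        exact absurd (Finset.mem_filter.mpr ⟨Finset.mem_univ _, hω⟩) hmem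
    · rw [Set.indicator_of_notMem (fun hmem => hω (Set.mem_preimage.mp hmem))]
      refine (Finset.sum_eq_zero fun p hp => ?_).symm
      refine Set.indicator_of_notMem (fun hmem => ?_) _
      have : f ω = p := by simpa using hmem
      exact hω (this ▸ (Finset.mem_filter.mp hp).2)
  have hdecg : ∀ (ω : Ω), (g ⁻¹' t).indicator (fun _ => (1:ℝ)) ω
      = ∑ q ∈ Qt, (g ⁻¹' {q}).indicator (fun _ => (1:ℝ)) ω := by
    intro ω
    by_cases hω : g ω ∈ t
    · rw [Set.indicator_of_mem (Set.mem_preimage.mpr hω)]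
      rw [Finset.sum_eq_single (g ω)]
      · simp
      · intro p _ hne
        exact Set.indicator_of_notMem
          (fun hmem => hne (Set.mem_singleton_iff.mp (Set.mem_preimage.mp hmem)).symm) _
      · intro hmem
        exact absurd (Finset.mem_filter.mpr ⟨Finset.mem_univ _, hω⟩) hmem
    · rw [Set.indicator_of_notMem (fun hmem => hω (Set.mem_preimage.mp hmem))]
      refine (Finset.sum_eq_zero fun p hp => ?_).symm
      refine Set.indicator_of_notMem (fun hmem => ?_) _
      have : g ω = p := by simpa using hmem
      exact hω (this ▸ (Finset.mem_filter.mp hp).2)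
  have hintf : ∀ p : β, Integrable ((f ⁻¹' {p}).indicator fun _ => (1:ℝ)) μ :=
    fun p => (integrable_const 1).indicator (hf (measurableSet_singleton p))
  have hintg : ∀ q : γ, Integrable ((g ⁻¹' {q}).indicator fun _ => (1:ℝ)) μ :=
    fun q => (integrable_const 1).indicator (hg (measurableSet_singleton q))
  -- condexp decompositions
  have hcf : (μ⟦f ⁻¹' s | m'⟧) =ᵐ[μ] ∑ p ∈ Ps, (μ⟦f ⁻¹' {p} | m'⟧) := by
    have e : (f ⁻¹' s).indicator (fun _ => (1:ℝ))
        = ∑ p ∈ Ps, (f ⁻¹' {p}).indicator (fun _ => (1:ℝ)) := by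
      funext ω; rw [hdecf ω, Finset.sum_apply]
    rw [e]
    exact condExp_finsetSum (fun p _ => hintf p) m'
  have hcg : (μ⟦g ⁻¹' t | m'⟧) =ᵐ[μ] ∑ q ∈ Qt, (μ⟦g ⁻¹' {q} | m'⟧) := by
    have e : (g ⁻¹' t).indicator (fun _ => (1:ℝ))
        = ∑ q ∈ Qt, (g ⁻¹' {q}).indicator (fun _ => (1:ℝ)) := by
      funext ω; rw [hdecg ω, Finset.sum_apply]
    rw [e]
    exact condExp_finsetSum (fun q _ => hintg q) m'
  have hcfg : (μ⟦f ⁻¹' s ∩ g ⁻¹' t | m'⟧)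
      =ᵐ[μ] ∑ p ∈ Ps, ∑ q ∈ Qt, (μ⟦f ⁻¹' {p} ∩ g ⁻¹' {q} | m'⟧) := by
    have e : (f ⁻¹' s ∩ g ⁻¹' t).indicator (fun _ => (1:ℝ))
        = ∑ p ∈ Ps, ∑ q ∈ Qt, (f ⁻¹' {p} ∩ g ⁻¹' {q}).indicator (fun _ => (1:ℝ)) := by
      funext ω
      have e1 : ∀ (A B : Set Ω), (A ∩ B).indicator (fun _ => (1:ℝ)) ω
          = A.indicator (fun _ => (1:ℝ)) ω * B.indicator (fun _ => (1:ℝ)) ω := by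
        intro A B
        by_cases hA : ω ∈ A <;> by_cases hB : ω ∈ B <;>
          simp [Set.indicator_of_mem, Set.indicator_of_notMem, hA, hB, Set.mem_inter_iff]
      rw [Finset.sum_apply]
      simp only [Finset.sum_apply]
      calc (f ⁻¹' s ∩ g ⁻¹' t).indicator (fun _ => (1:ℝ)) ω
          = (∑ p ∈ Ps, (f ⁻¹' {p}).indicator (fun _ => (1:ℝ)) ω)
            * (∑ q ∈ Qt, (g ⁻¹' {q}).indicator (fun _ => (1:ℝ)) ω) := by
            rw [e1, hdecf ω, hdecg ω]
        _ = ∑ p ∈ Ps, ∑ q ∈ Qt, (f ⁻¹' {p}).indicator (fun _ => (1:ℝ)) ω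
              * (g ⁻¹' {q}).indicator (fun _ => (1:ℝ)) ω := by
            rw [Finset.sum_mul_sum]
        _ = _ := by
            refine Finset.sum_congr rfl fun p _ => Finset.sum_congr rfl fun q _ => ?_
            rw [e1]
    rw [e]
    refine (condExp_finsetSum (fun p _ => ?_) m').trans ?_
    · rw [Finset.sum_fn]
      exact integrable_finset_sum _ fun q _ =>
        (integrable_const 1).indicator ((hf (measurableSet_singleton p)).inter
          (hg (measurableSet_singleton q)))
    · refine eventuallyEq_sum fun p _ => ?_
      exact condExp_finsetSum (fun q _ => (integrable_const 1).indicator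
        ((hf (measurableSet_singleton p)).inter (hg (measurableSet_singleton q)))) m'
  -- combine
  refine hcfg.trans ?_
  have hsum : (∑ p ∈ Ps, ∑ q ∈ Qt, (μ⟦f ⁻¹' {p} ∩ g ⁻¹' {q} | m'⟧))
      =ᵐ[μ] ∑ p ∈ Ps, ∑ q ∈ Qt,
        (fun ω => (μ⟦f ⁻¹' {p} | m'⟧) ω * (μ⟦g ⁻¹' {q} | m'⟧) ω) :=
    eventuallyEq_sum fun p _ => eventuallyEq_sum fun q _ => h p q
  refine hsum.trans ?_
  have := (hcf.mul hcg).symm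
  refine Filter.EventuallyEq.trans ?_ this
  filter_upwards with ω
  simp only [Finset.sum_apply, Pi.mul_apply]
  rw [Finset.sum_mul_sum]


/-- The σ-algebra generated by the aggregate. -/
def aggSigma {Ω G : Type*} [AddCommMonoid G] [MeasurableSpace G] {N : ℕ} (X : Ω → Fin N → G) : MeasurableSpace Ω :=
  MeasurableSpace.comap (fun ω => ∑ i, X ω i) inferInstance

/-- Core of Theorem 1, case (ii): the pair consisting of the padded gradients
`(X 0 + K 0, …, X (N-1) + K (N-1))` together with the aggregate key `∑ i, K i` is
conditionally independent of the gradients `X` given the aggregate gradient `∑ i, X i`. -/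
theorem padded_gradients_and_aggregate_key_condIndep_given_aggregate
    {Ω : Type*} [MeasurableSpace Ω] [StandardBorelSpace Ω]
    (μ : Measure Ω) [IsProbabilityMeasure μ]
    {G : Type*} [AddCommGroup G] [Fintype G] [Nontrivial G]
    [MeasurableSpace G] [MeasurableSingletonClass G]
    {N : ℕ} (hN : 1 ≤ N)
    (X : Ω → Fin N → G) (hX : Measurable X)
    (K : Fin N → Ω → G) (hK : ∀ i, Measurable (K i))
    (hKiIndep : iIndepFun K μ)
    (hKunif : ∀ i, Measure.map (K i) μ = (PMF.uniformOfFintype G).toMeasure)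
    (hindep : IndepFun (fun ω i => K i ω) X μ) :
    CondIndepFun (MeasurableSpace.comap (fun ω => ∑ i, X ω i) inferInstance)
      (Measurable.comap_le ((measurable_of_countable fun v : Fin N → G => ∑ i, v i).comp hX))
      (fun ω => ((fun i => X ω i + K i ω), ∑ i, K i ω)) X μ := by
  classical
  set Kv : Ω → Fin N → G := fun ω i => K i ω with hKvdef
  have hKvm : Measurable Kv := measurable_pi_lambda _ fun i => hK i
  have hm'X : aggSigma X ≤ MeasurableSpace.comap X inferInstance := by
    rintro _ ⟨u, hu, rfl⟩
    exact ⟨(fun v : Fin N → G => ∑ i, v i) ⁻¹' u,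
      (measurable_of_countable (fun v : Fin N → G => ∑ i, v i)) hu, rfl⟩
  have hm'0 : aggSigma X ≤ ‹MeasurableSpace Ω› := hm'X.trans hX.comap_le
  -- measure of singletons of the key vector
  have hKset : ∀ k : Fin N → G, Kv ⁻¹' {k} = ⋂ i, K i ⁻¹' {k i} := by
    intro k; ext ω
    simp [Kv, Set.mem_iInter, funext_iff]
  have hKmeas : ∀ k : Fin N → G, μ (Kv ⁻¹' {k}) = (Fintype.card G : ℝ≥0∞)⁻¹ ^ N := by
    intro k
    rw [hKset k, hKiIndep.meas_iInter (fun i => ⟨{k i}, measurableSet_singleton _, rfl⟩)]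
    have h1 : ∀ i : Fin N, μ (K i ⁻¹' {k i}) = (Fintype.card G : ℝ≥0∞)⁻¹ := by
      intro i
      rw [← Measure.map_apply (hK i) (measurableSet_singleton _), hKunif i,
        PMF.toMeasure_apply_singleton _ _ (measurableSet_singleton _),
        PMF.uniformOfFintype_apply]
    simp [h1, Finset.prod_const, Finset.card_univ, Fintype.card_fin]
  set r : ℝ := ((Fintype.card G : ℝ≥0∞)⁻¹ ^ N).toReal with hrdef
  have hKr : ∀ k : Fin N → G, (μ (Kv ⁻¹' {k})).toReal = r := fun k => by rw [hKmeas k]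
  -- conditional expectation of key-vector events intersected with X-events
  have hA : ∀ (k x : Fin N → G),
      (μ⟦Kv ⁻¹' {k} ∩ X ⁻¹' {x} | aggSigma X⟧)
        =ᵐ[μ] fun ω => r * (μ⟦X ⁻¹' {x} | aggSigma X⟧) ω := by
    intro k x
    have h := helperA (m := aggSigma X) μ hKvm hX hindep hm'X
      (measurableSet_singleton k) (measurableSet_singleton x)
    rw [hKr k] at h
    exact h
  -- m'-measurability of aggregate-level sets
  have hAm' : ∀ d : G, MeasurableSet[aggSigma X] ((fun ω => ∑ i, X ω i) ⁻¹' {d}) :=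
    fun d => ⟨{d}, measurableSet_singleton _, rfl⟩
  have hAmeas : ∀ d : G, MeasurableSet ((fun ω => ∑ i, X ω i) ⁻¹' {d}) :=
    fun d => hm'0 _ (hAm' d)
  -- localization: the condexp of {X = x} is supported on {∑ X = ∑ x}
  have hloc : ∀ x : Fin N → G, (μ⟦X ⁻¹' {x} | aggSigma X⟧)
      =ᵐ[μ] ((fun ω => ∑ i, X ω i) ⁻¹' {∑ i, x i}).indicator (μ⟦X ⁻¹' {x} | aggSigma X⟧) := by
    intro x
    have hsub : X ⁻¹' {x} ⊆ (fun ω => ∑ i, X ω i) ⁻¹' {∑ i, x i} := by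
      intro ω hω
      have hxx : X ω = x := hω
      simp [Set.mem_preimage, hxx]
    have e : (X ⁻¹' {x}).indicator (fun _ => (1:ℝ))
        = ((fun ω => ∑ i, X ω i) ⁻¹' {∑ i, x i}).indicator
            ((X ⁻¹' {x}).indicator fun _ => (1:ℝ)) := by
      rw [Set.indicator_indicator, Set.inter_eq_self_of_subset_right hsub]
    conv_lhs => rw [e]
    exact condExp_indicator ((integrable_const 1).indicator (hX (measurableSet_singleton x)))
      (hAm' _)
  -- sum over a fiber of the aggregate
  have hsum : ∀ d : G,
      (∑ x ∈ Finset.univ.filter (fun x : Fin N → G => (∑ i, x i) = d),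
        (μ⟦X ⁻¹' {x} | aggSigma X⟧))
      =ᵐ[μ] ((fun ω => ∑ i, X ω i) ⁻¹' {d}).indicator (fun _ => (1:ℝ)) := by
    intro d
    have e : (∑ x ∈ Finset.univ.filter (fun x : Fin N → G => (∑ i, x i) = d),
        (X ⁻¹' {x}).indicator (fun _ => (1:ℝ)))
        = ((fun ω => ∑ i, X ω i) ⁻¹' {d}).indicator (fun _ => (1:ℝ)) := by
      funext ω
      rw [Finset.sum_apply]
      by_cases hω : (∑ i, X ω i) = d
      · rw [Set.indicator_of_mem (show ω ∈ (fun ω => ∑ i, X ω i) ⁻¹' {d} from hω)]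
        rw [Finset.sum_eq_single_of_mem (X ω)
          (Finset.mem_filter.mpr ⟨Finset.mem_univ _, hω⟩)
          (fun x _ hne => Set.indicator_of_notMem
            (fun hmem => hne (Set.mem_singleton_iff.mp (Set.mem_preimage.mp hmem)).symm) _)]
        simp
      · rw [Set.indicator_of_notMem
          (s := (fun ω => ∑ i, X ω i) ⁻¹' {d}) (fun hmem => hω hmem)]
        refine Finset.sum_eq_zero fun x hx => ?_
        refine Set.indicator_of_notMem (fun hmem => ?_) _
        have hXx : X ω = x := Set.mem_singleton_iff.mp (Set.mem_preimage.mp hmem)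
        exact hω (by rw [hXx]; exact (Finset.mem_filter.mp hx).2)
    have hsm : StronglyMeasurable[aggSigma X]
        (((fun ω => ∑ i, X ω i) ⁻¹' {d}).indicator (fun _ => (1:ℝ))) :=
      stronglyMeasurable_const.indicator (hAm' d)
    calc (∑ x ∈ Finset.univ.filter (fun x : Fin N → G => (∑ i, x i) = d),
          (μ⟦X ⁻¹' {x} | aggSigma X⟧))
        =ᵐ[μ] μ[∑ x ∈ Finset.univ.filter (fun x : Fin N → G => (∑ i, x i) = d),
            (X ⁻¹' {x}).indicator (fun _ => (1:ℝ)) | aggSigma X] :=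
          (condExp_finsetSum (fun x _ =>
            (integrable_const 1).indicator (hX (measurableSet_singleton x))) (aggSigma X)).symm
      _ =ᵐ[μ] _ := by
          rw [e, condExp_of_stronglyMeasurable hm'0 hsm
            ((integrable_const 1).indicator (hAmeas d))]
  -- measurability of the padded pair
  have hfm : Measurable (fun ω => ((fun i => X ω i + K i ω), ∑ i, K i ω)) := by
    refine Measurable.prodMk ?_ ?_
    · exact measurable_pi_lambda _ fun i =>
        (measurable_of_countable (fun p : G × G => p.1 + p.2)).comp
          (((measurable_pi_apply i).comp hX).prodMk (hK i))
    · exact (measurable_of_countable (fun v : Fin N → G => ∑ i, v i)).comp hKvm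
  -- the key set identities
  have hiff : ∀ (v x : Fin N → G) (c : G),
      ((∑ i, (v i - x i)) = c) ↔ ((∑ i, x i) = (∑ i, v i) - c) := by
    intro v x c
    rw [Finset.sum_sub_distrib]
    constructor
    · intro h; rw [← h]; abel
    · intro h; rw [h]; abel
  have hset_pos : ∀ (v x : Fin N → G) (c : G), ((∑ i, (v i - x i)) = c) →
      (fun ω => ((fun i => X ω i + K i ω), ∑ i, K i ω)) ⁻¹' {(v, c)} ∩ X ⁻¹' {x}
        = Kv ⁻¹' {fun i => v i - x i} ∩ X ⁻¹' {x} := by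
    intro v x c hc
    ext ω
    simp only [Set.mem_inter_iff, Set.mem_preimage, Set.mem_singleton_iff, Prod.mk.injEq,
      funext_iff, Kv]
    constructor
    · rintro ⟨⟨h1, _⟩, h3⟩
      refine ⟨fun i => ?_, h3⟩
      rw [← h3 i]
      exact eq_sub_of_add_eq' (h1 i)
    · rintro ⟨h1, h3⟩
      refine ⟨⟨fun i => ?_, ?_⟩, h3⟩
      · rw [h1 i, h3 i]; abel
      · exact (Finset.sum_congr rfl fun i _ => h1 i).trans hc
  have hset_neg : ∀ (v x : Fin N → G) (c : G), ¬((∑ i, (v i - x i)) = c) →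
      (fun ω => ((fun i => X ω i + K i ω), ∑ i, K i ω)) ⁻¹' {(v, c)} ∩ X ⁻¹' {x}
        = (∅ : Set Ω) := by
    intro v x c hc
    ext ω
    simp only [Set.mem_inter_iff, Set.mem_preimage, Set.mem_singleton_iff, Prod.mk.injEq,
      funext_iff, Set.mem_empty_iff_false, iff_false, not_and]
    rintro ⟨h1, h2⟩ h3
    refine hc ?_
    refine (Finset.sum_congr rfl fun i _ => ?_).trans h2
    rw [← h3 i]
    exact (eq_sub_of_add_eq' (h1 i)).symm
  -- pointwise partition over the value of X
  have hpart : ∀ (A : Set Ω) (ω : Ω), A.indicator (fun _ => (1:ℝ)) ω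
      = ∑ x : Fin N → G, (A ∩ X ⁻¹' {x}).indicator (fun _ => (1:ℝ)) ω := by
    intro A ω
    rw [Finset.sum_eq_single_of_mem (X ω) (Finset.mem_univ _)
      (fun x _ hne => Set.indicator_of_notMem
        (fun hm => hne (Set.mem_singleton_iff.mp hm.2).symm) _)]
    by_cases hA : ω ∈ A
    · rw [Set.indicator_of_mem hA, Set.indicator_of_mem (Set.mem_inter hA (Set.mem_preimage.mpr (Set.mem_singleton _)))]
    · rw [Set.indicator_of_notMem hA, Set.indicator_of_notMem (fun hm => hA hm.1)]
  -- conditional expectation of the pair singleton events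
  have hfP : ∀ (v : Fin N → G) (c : G),
      (μ⟦(fun ω => ((fun i => X ω i + K i ω), ∑ i, K i ω)) ⁻¹' {(v, c)} | aggSigma X⟧)
      =ᵐ[μ] fun ω => r * ((fun ω => ∑ i, X ω i) ⁻¹' {(∑ i, v i) - c}).indicator
        (fun _ => (1:ℝ)) ω := by
    intro v c
    set fP : Set Ω := (fun ω => ((fun i => X ω i + K i ω), ∑ i, K i ω)) ⁻¹' {(v, c)} with hfPdef
    have hfPmeas : MeasurableSet fP := hfm (measurableSet_singleton _)
    have edec : fP.indicator (fun _ => (1:ℝ))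
        = ∑ x : Fin N → G, (fP ∩ X ⁻¹' {x}).indicator (fun _ => (1:ℝ)) := by
      funext ω
      rw [Finset.sum_apply]
      exact hpart fP ω
    have hP := fun x : Fin N → G => (∑ i, (v i - x i)) = c
    calc (μ⟦fP | aggSigma X⟧)
        =ᵐ[μ] ∑ x : Fin N → G, (μ⟦fP ∩ X ⁻¹' {x} | aggSigma X⟧) := by
          rw [show fP.indicator (fun (ω : Ω) => (1:ℝ)) = _ from edec]
          exact condExp_finsetSum (fun x _ =>
            (integrable_const 1).indicator (hfPmeas.inter (hX (measurableSet_singleton x)))) (aggSigma X)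
      _ = (∑ x ∈ Finset.univ.filter (fun x : Fin N → G => (∑ i, (v i - x i)) = c),
            (μ⟦fP ∩ X ⁻¹' {x} | aggSigma X⟧))
          + ∑ x ∈ Finset.univ.filter (fun x : Fin N → G => ¬((∑ i, (v i - x i)) = c)),
            (μ⟦fP ∩ X ⁻¹' {x} | aggSigma X⟧) := by
          rw [Finset.sum_filter_add_sum_filter_not]
      _ =ᵐ[μ] (∑ x ∈ Finset.univ.filter (fun x : Fin N → G => (∑ i, (v i - x i)) = c),
            fun ω => r * (μ⟦X ⁻¹' {x} | aggSigma X⟧) ω) + 0 := by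
          refine Filter.EventuallyEq.add ?_ ?_
          · refine eventuallyEq_sum fun x hx => ?_
            rw [hfPdef, hset_pos v x c (Finset.mem_filter.mp hx).2]
            exact hA _ x
          · have hz : ∀ x ∈ Finset.univ.filter
                (fun x : Fin N → G => ¬((∑ i, (v i - x i)) = c)),
                (μ⟦fP ∩ X ⁻¹' {x} | aggSigma X⟧) = 0 := by
              intro x hx
              rw [hfPdef, hset_neg v x c (Finset.mem_filter.mp hx).2]
              rw [show (∅ : Set Ω).indicator (fun ω => (1:ℝ)) = 0 from Set.indicator_empty _,
                condExp_zero]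
            rw [Finset.sum_eq_zero hz]
      _ =ᵐ[μ] _ := by
          rw [add_zero]
          have hFeq : Finset.univ.filter (fun x : Fin N → G => (∑ i, (v i - x i)) = c)
              = Finset.univ.filter (fun x : Fin N → G => (∑ i, x i) = (∑ i, v i) - c) :=
            Finset.filter_congr (fun x _ => by rw [hiff v x c])
          rw [hFeq]
          filter_upwards [hsum ((∑ i, v i) - c)] with ω hω
          rw [Finset.sum_apply, ← Finset.mul_sum, ← Finset.sum_apply, hω]
  -- apply the singleton reduction
  refine helperB (m' := aggSigma X) μ hm'0 hfm hX ?_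
  rintro ⟨v, c⟩ x
  by_cases hc : (∑ i, (v i - x i)) = c
  · rw [hset_pos v x c hc]
    have hxd : (∑ i, x i) = (∑ i, v i) - c := (hiff v x c).mp hc
    filter_upwards [hA (fun i => v i - x i) x, hfP v c, hloc x] with ω h1 h2 h3
    rw [h1, h2]
    rw [hxd] at h3
    rw [h3]
    by_cases hω : ω ∈ (fun ω => ∑ i, X ω i) ⁻¹' {(∑ i, v i) - c}
    · simp [Set.indicator_of_mem hω]
    · simp [Set.indicator_of_notMem hω]
  · rw [hset_neg v x c hc]
    rw [show (∅ : Set Ω).indicator (fun ω => (1:ℝ)) = 0 from Set.indicator_empty _, condExp_zero]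
    have hxd : ¬((∑ i, x i) = (∑ i, v i) - c) := fun h => hc ((hiff v x c).mpr h)
    symm
    filter_upwards [hfP v c, hloc x] with ω h2 h3
    rw [Pi.zero_apply, h2, h3]
    by_cases hω : (∑ i, X ω i) = (∑ i, v i) - c
    · have hω2 : ω ∉ (fun ω => ∑ i, X ω i) ⁻¹' {∑ i, x i} := by
        intro hmem
        exact hxd (by rw [← Set.mem_singleton_iff.mp (Set.mem_preimage.mp hmem)]; exact hω)
      simp [Set.indicator_of_notMem hω2]
    · have hω1 : ω ∉ (fun ω => ∑ i, X ω i) ⁻¹' {(∑ i, v i) - c} := fun hmem => hω hmem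
      simp [Set.indicator_of_notMem hω1]
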